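/- Define f_{r,k}(x) = \sum_{b=0}^\infty ((ab+r)^{b+k}/b!) x^{ab+r}. Then f_{r,k}(x) = (x d/dx)^{k+1} (z(x)^r / r), where z(x) is the solution of z = x e^{z^a}. -/

import Mathlib

open PowerSeries

/-- `expOf f = exp ∘ f` for a power series `f` with zero constant term. -/
noncomputable def expOf (f : PowerSeries ℚ) : PowerSeries ℚ :=
  PowerSeries.mk fun n =>
    ∑ m ∈ Finset.range (n + 1), (PowerSeries.coeff n (f ^ m)) / Nat.factorial m

/-- The operator `x d/dx` on formal power series: `(x d/dx)(∑ c_n x^n) = ∑ n c_n x^n`. -/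
noncomputable def xD (f : PowerSeries ℚ) : PowerSeries ℚ :=
  PowerSeries.mk fun n => (n : ℚ) * PowerSeries.coeff n f


lemma coeff_xD (n : ℕ) (f : PowerSeries ℚ) : coeff n (xD f) = (n : ℚ) * coeff n f :=
  coeff_mk _ _

lemma xD_mul (f g : PowerSeries ℚ) : xD (f * g) = xD f * g + f * xD g := by
  ext n
  rw [coeff_xD, map_add, coeff_mul, coeff_mul, coeff_mul, Finset.mul_sum, ← Finset.sum_add_distrib]
  refine Finset.sum_congr rfl fun p hp => ?_
  rw [Finset.HasAntidiagonal.mem_antidiagonal] at hp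
  rw [coeff_xD, coeff_xD, ← hp]
  push_cast
  ring

lemma xD_pow (f : PowerSeries ℚ) (m : ℕ) :
    xD (f ^ (m + 1)) = C (m + 1 : ℚ) * (f ^ m * xD f) := by
  induction m with
  | zero => ext n; simp [coeff_xD, coeff_C_mul]
  | succ m ih =>
    have hC : C ((m + 1 : ℕ) + 1 : ℚ) = C ((m : ℚ) + 1) + 1 := by
      push_cast; rw [map_add, map_one]
    rw [pow_succ, xD_mul, ih, hC]
    ring

lemma coeff_pow_eq_zero {f : PowerSeries ℚ} (hf : constantCoeff f = 0) {n m : ℕ}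
    (h : n < m) : coeff n (f ^ m) = 0 := by
  have : (X : PowerSeries ℚ) ^ m ∣ f ^ m := pow_dvd_pow_of_dvd (X_dvd_iff.2 hf) m
  exact X_pow_dvd_iff.1 this n h

lemma coeff_expOf {f : PowerSeries ℚ} (hf : constantCoeff f = 0) {n M : ℕ} (h : n < M) :
    coeff n (expOf f) = ∑ m ∈ Finset.range M, (coeff n (f ^ m)) / Nat.factorial m := by
  rw [expOf, coeff_mk]
  refine Finset.sum_subset (Finset.range_subset_range.2 h) fun m hm hm' => ?_
  rw [Finset.mem_range, not_lt] at hm'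
  rw [coeff_pow_eq_zero hf hm', zero_div]

lemma xD_expOf {f : PowerSeries ℚ} (hf : constantCoeff f = 0) :
    xD (expOf f) = expOf f * xD f := by
  ext n
  rw [coeff_xD, coeff_mul]
  have step : ∀ p ∈ Finset.HasAntidiagonal.antidiagonal n,
      coeff p.1 (expOf f) * coeff p.2 (xD f)
        = ∑ m ∈ Finset.range (n + 1),
            (coeff p.1 (f ^ m) * coeff p.2 (xD f)) / Nat.factorial m := by
    intro p hp
    rw [Finset.HasAntidiagonal.mem_antidiagonal] at hp
    rw [coeff_expOf hf (Nat.lt_succ_of_le (le_of_add_le_left hp.le)), Finset.sum_mul]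
    exact Finset.sum_congr rfl fun m _ => by ring
  rw [Finset.sum_congr rfl step, Finset.sum_comm]
  have inner : ∀ m ∈ Finset.range (n + 1),
      ∑ p ∈ Finset.HasAntidiagonal.antidiagonal n,
          (coeff p.1 (f ^ m) * coeff p.2 (xD f)) / Nat.factorial m
        = (n : ℚ) * coeff n (f ^ (m + 1)) / Nat.factorial (m + 1) := by
    intro m _
    rw [← Finset.sum_div, ← coeff_mul]
    have := xD_pow f m
    have h2 : coeff n (xD (f ^ (m+1))) = ((m:ℚ)+1) * coeff n (f ^ m * xD f) := by
      rw [this, coeff_C_mul]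
    rw [coeff_xD] at h2
    have hm1 : ((m:ℚ)+1) ≠ 0 := by positivity
    have : coeff n (f ^ m * xD f) = (n : ℚ) * coeff n (f ^ (m+1)) / ((m:ℚ)+1) := by
      rw [eq_div_iff hm1]
      linear_combination -h2
    rw [this, Nat.factorial_succ]
    push_cast
    field_simp
  rw [Finset.sum_congr rfl inner]
  rw [coeff_expOf hf (Nat.lt_succ_of_lt (Nat.lt_succ_self n)), Finset.sum_range_succ',
    mul_add, Finset.mul_sum]
  have h0 : (n:ℚ) * (coeff n (f ^ 0) / Nat.factorial 0) = 0 := by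
    rcases Nat.eq_zero_or_pos n with h | h
    · subst h; simp
    · rw [pow_zero, coeff_one, if_neg h.ne']; simp
  rw [h0, add_zero]
  exact (Finset.sum_congr rfl fun m _ => by ring).symm


lemma xD_X : xD (X : PowerSeries ℚ) = X := by
  ext n
  rw [coeff_xD, coeff_X]
  split <;> simp_all

lemma constantCoeff_expOf (f : PowerSeries ℚ) : constantCoeff (expOf f) = 1 := by
  rw [← coeff_zero_eq_constantCoeff_apply, expOf, coeff_mk]
  simp

section Main
variable {a : ℕ} (ha : 0 < a) {z : PowerSeries ℚ}
  (h0 : PowerSeries.constantCoeff z = 0) (hz : z = PowerSeries.X * expOf (z ^ a))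

include ha h0 hz

lemma key_eq : xD z = z + C (a : ℚ) * (z ^ a * xD z) := by
  have hza : constantCoeff (z ^ a) = 0 := by rw [map_pow, h0, zero_pow ha.ne']
  have ha' : a - 1 + 1 = a := Nat.succ_pred_eq_of_pos ha
  have hca : ((a - 1 : ℕ) : ℚ) + 1 = (a : ℚ) := by
    rw [Nat.cast_sub ha]; push_cast; ring
  have hp : xD (z ^ a) = C (a : ℚ) * (z ^ (a - 1) * xD z) := by
    conv_lhs => rw [← ha']
    rw [xD_pow, hca]
  have hzz : z * z ^ (a - 1) = z ^ a := by
    conv_rhs => rw [← ha']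
    rw [pow_succ]; ring
  conv_lhs => rw [hz, xD_mul, xD_X, xD_expOf hza, ← mul_assoc, ← hz, hp]
  rw [← hzz]; ring

lemma W_eq (t : ℕ) : z ^ t * xD z = z ^ (t + 1) + C (a : ℚ) * (z ^ (t + a) * xD z) := by
  conv_lhs => rw [key_eq ha h0 hz]
  rw [pow_succ, pow_add]; ring

lemma coeffE (t n : ℕ) :
    (((t : ℚ) + 1) + a) * ((n : ℚ) * coeff n (z ^ (t + 1)))
      = ((t : ℚ) + 1) * (((t : ℚ) + 1) + a) * coeff n (z ^ (t + 1))
        + (a : ℚ) * ((t : ℚ) + 1) * ((n : ℚ) * coeff n (z ^ (t + 1 + a))) := by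
  have e1 : (n : ℚ) * coeff n (z ^ (t + 1)) = ((t : ℚ) + 1) * coeff n (z ^ t * xD z) := by
    rw [← coeff_xD, xD_pow, coeff_C_mul]
  have h2' : t + 1 + a = (t + a) + 1 := by ring
  have e2 : (n : ℚ) * coeff n (z ^ (t + 1 + a))
      = (((t : ℚ) + (a : ℚ)) + 1) * coeff n (z ^ (t + a) * xD z) := by
    rw [← coeff_xD, h2', xD_pow, coeff_C_mul]; push_cast; ring
  have e3 : coeff n (z ^ t * xD z)
      = coeff n (z ^ (t + 1)) + (a : ℚ) * coeff n (z ^ (t + a) * xD z) := by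
    rw [W_eq ha h0 hz t, map_add, coeff_C_mul]
  linear_combination (((t : ℚ) + 1) + a) * e1 - ((a : ℚ) * ((t : ℚ) + 1)) * e2
    + (((t : ℚ) + 1) * (((t : ℚ) + 1) + a)) * e3

lemma coeff_diag (t : ℕ) : coeff (t + 1) (z ^ (t + 1)) = 1 := by
  have hE : z ^ (t + 1) = X ^ (t + 1) * expOf (z ^ a) ^ (t + 1) := by
    conv_lhs => rw [hz]
    rw [mul_pow]
  rw [hE]
  have := coeff_X_pow_mul (expOf (z ^ a) ^ (t + 1)) (t + 1) 0
  simpa [coeff_zero_eq_constantCoeff_apply, constantCoeff_expOf] using this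

lemma main_coeff : ∀ b t : ℕ,
    (((t + 1) + a * b : ℕ) : ℚ) * coeff ((t + 1) + a * b) (z ^ (t + 1))
      = ((t : ℚ) + 1) * (((t + 1) + a * b : ℕ) : ℚ) ^ b / (Nat.factorial b) := by
  intro b
  induction b with
  | zero => intro t; simp [coeff_diag ha h0 hz t]
  | succ b ih =>
    intro t
    set n := (t + 1) + a * (b + 1) with hndef
    have hidx : ((t + a) + 1) + a * b = n := by rw [hndef]; ring
    have H2 := ih (t + a)
    rw [hidx] at H2
    have H1 := coeffE ha h0 hz t n
    have hfac : ((Nat.factorial b : ℕ) : ℚ) ≠ 0 := by positivity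
    have hb1 : ((b : ℚ) + 1) ≠ 0 := by positivity
    have hn : (n : ℚ) = ((t : ℚ) + 1) + (a : ℚ) * ((b : ℚ) + 1) := by
      rw [hndef]; push_cast; ring
    have hta : ((t : ℚ) + 1 + a) ≠ 0 := by positivity
    have haQ : (a : ℚ) ≠ 0 := by positivity
    have hcast : (((t + a : ℕ) : ℚ) + 1) = ((t : ℚ) + 1 + a) := by push_cast; ring
    rw [show (t + a) + 1 = t + 1 + a by ring] at H2
    have hu : coeff n (z ^ (t + 1))
        = ((t : ℚ) + 1) * (n : ℚ) ^ b / (((b : ℚ) + 1) * (Nat.factorial b)) := by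
      rw [eq_div_iff (by positivity)]
      have h3 : (((t : ℚ) + 1) + a) * ((a : ℚ) * ((b : ℚ) + 1)) * coeff n (z ^ (t + 1))
          * (Nat.factorial b)
          = (a : ℚ) * ((t : ℚ) + 1) * (((t : ℚ) + a + 1) * (n : ℚ) ^ b) := by
        have := H2
        field_simp at this
        push_cast at this
        linear_combination (Nat.factorial b : ℚ) * H1
          - ((((t : ℚ) + 1) + a) * (Nat.factorial b) * coeff n (z ^ (t + 1))) * hn
          + (a : ℚ) * ((t : ℚ) + 1) * this
      have h4 : ((t : ℚ) + 1 + a) * (a : ℚ) * (coeff n (z ^ (t + 1)) * (((b : ℚ) + 1) * (Nat.factorial b)))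
          = ((t : ℚ) + 1 + a) * (a : ℚ) * (((t : ℚ) + 1) * (n : ℚ) ^ b) := by
        linear_combination h3
      exact mul_left_cancel₀ (mul_ne_zero hta haQ) h4
    rw [hu, Nat.factorial_succ]
    push_cast
    rw [pow_succ]
    field_simp
end Main

lemma pow_mod (a : ℕ) (z : PowerSeries ℚ) (N : ℕ)
    (hN : ∀ i, i ≤ N → coeff i z ≠ 0 → i % a = 1 % a) :
    ∀ s n, n ≤ N → coeff n (z ^ s) ≠ 0 → n ≡ s [MOD a] := by
  intro s
  induction s with
  | zero =>
    intro n _ h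
    rw [pow_zero, coeff_one] at h
    rcases Nat.eq_zero_or_pos n with h' | h'
    · subst h'; rfl
    · rw [if_neg h'.ne'] at h; exact absurd rfl h
  | succ s ih =>
    intro n hn h
    rw [pow_succ, coeff_mul] at h
    obtain ⟨p, hp, hne⟩ := Finset.exists_ne_zero_of_sum_ne_zero h
    rw [Finset.HasAntidiagonal.mem_antidiagonal] at hp
    have h1 := ih p.1 (by omega) (left_ne_zero_of_mul hne)
    have h2 : p.2 ≡ 1 [MOD a] := hN p.2 (by omega) (right_ne_zero_of_mul hne)
    have h3 : p.1 + p.2 ≡ s + 1 [MOD a] := Nat.ModEq.add h1 h2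
    rwa [hp] at h3

section Main
variable {a : ℕ} (ha : 0 < a) {z : PowerSeries ℚ}
  (h0 : PowerSeries.constantCoeff z = 0) (hz : z = PowerSeries.X * expOf (z ^ a))
include ha h0 hz

lemma z_mod : ∀ n, coeff n z ≠ 0 → n % a = 1 % a := by
  intro n
  induction n using Nat.strong_induction_on with
  | _ n IH =>
    match n with
    | 0 =>
      intro hne
      rw [coeff_zero_eq_constantCoeff_apply, h0] at hne
      exact absurd rfl hne
    | m + 1 =>
      intro hne
      rw [hz, coeff_succ_X_mul, expOf, coeff_mk] at hne
      obtain ⟨j, _, hne2⟩ := Finset.exists_ne_zero_of_sum_ne_zero hne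
      have hc : coeff m ((z ^ a) ^ j) ≠ 0 := fun hc => hne2 (by rw [hc, zero_div])
      rw [← pow_mul] at hc
      have hmod := pow_mod a z m (fun i hi h => IH i (by omega) h) (a * j) m le_rfl hc
      have hm : m ≡ 0 [MOD a] := hmod.trans ((Nat.modEq_zero_iff_dvd).2 (dvd_mul_right a j))
      exact hm.add_right 1

lemma zr_mod (r n : ℕ) (h : coeff n (z ^ r) ≠ 0) : n ≡ r [MOD a] :=
  pow_mod a z n (fun i _ hi => z_mod ha h0 hz i hi) r n le_rfl h

end Main

lemma coeff_xD_iterate (j n : ℕ) (f : PowerSeries ℚ) :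
    coeff n (xD^[j] f) = (n : ℚ) ^ j * coeff n f := by
  induction j with
  | zero => simp
  | succ j ih => rw [Function.iterate_succ_apply', coeff_xD, ih, pow_succ]; ring


/-- With `z` the solution of `z = x e^{z^a}`, `z(0) = 0`, and
`f_{r,k}(x) = ∑_{b≥0} ((ab+r)^{b+k}/b!) x^{ab+r}` (coefficient `(ab+r)^{b+k}/b!` at
`n = ab+r`), one has `f_{r,k} = (x d/dx)^{k+1} (z^r / r)`. -/
theorem f_rk_eq_xD_iterate (a r k : ℕ) (ha : 0 < a) (hr1 : 1 ≤ r) (hr2 : r ≤ a)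
    (z : PowerSeries ℚ) (h0 : PowerSeries.constantCoeff z = 0)
    (hz : z = PowerSeries.X * expOf (z ^ a)) :
    (PowerSeries.mk fun n =>
        if r ≤ n ∧ a ∣ (n - r) then
          (n : ℚ) ^ ((n - r) / a + k) / Nat.factorial ((n - r) / a)
        else 0)
      = xD^[k + 1] (PowerSeries.C ((r : ℚ))⁻¹ * z ^ r) := by
  ext n
  rw [coeff_mk, coeff_xD_iterate, coeff_C_mul]
  split_ifs with h
  · obtain ⟨hrn, hdvd⟩ := h
    set b := (n - r) / a with hbdef
    have hab : a * b = n - r := Nat.mul_div_cancel' hdvd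
    have hnr : (r - 1 + 1) + a * b = n := by omega
    have H := main_coeff ha h0 hz b (r - 1)
    rw [hnr] at H
    have hr' : r - 1 + 1 = r := by omega
    rw [hr'] at H
    have hcr : ((r - 1 : ℕ) : ℚ) + 1 = (r : ℚ) := by
      rw [Nat.cast_sub hr1]; push_cast; ring
    rw [hcr] at H
    have hn0 : (n : ℚ) ≠ 0 := by
      have : 0 < n := by omega
      positivity
    have hr0 : (r : ℚ) ≠ 0 := by positivity
    have hfac : ((Nat.factorial b : ℕ) : ℚ) ≠ 0 := by positivity
    have hc : coeff n (z ^ r) = (r : ℚ) * (n : ℚ) ^ b / ((Nat.factorial b : ℚ) * n) := by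
      rw [eq_div_iff hfac] at H
      rw [eq_div_iff (mul_ne_zero hfac hn0)]
      linear_combination H
    rw [hc, pow_add]
    field_simp
    ring
  · rcases le_or_gt r n with hrn | hrn
    · have hcoeff : coeff n (z ^ r) = 0 := by
        by_contra hc
        have := ((zr_mod ha h0 hz r n hc).symm)
        have hd : a ∣ n - r := (Nat.modEq_iff_dvd' hrn).1 this
        exact h ⟨hrn, hd⟩
      rw [hcoeff]; ring
    · rw [coeff_pow_eq_zero h0 hrn]; ring
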